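/- Let G be a complete multipartite graph and let 𝒢 be the G-join replacing each vertex y of G by a complete graph K_{p_y}. Consider the partition of 𝒢 into s parts corresponding to the independent parts of G, with N total vertices and the r-th part covering N_r vertices. For each part r with n_r ≥ 2 blocks, the vector equal to 1 on one block K_{p_l} of part r, equal to -p_l/p_m on another block K_{p_m} of part r, and 0 elsewhere is an eigenvector of the Laplacian L(𝒢) with eigenvalue N - N_r. -/

import Mathlib

open Matrix
open scoped Classical

/-- The `G`-join over a complete multipartite base graph, with complete graphs as blocks:
vertices carry a `part` (the independent part of the complete multipartite base graph) and a
`block` (the vertex of the base graph, i.e. the complete graph replacing it); two distinct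
vertices are adjacent iff they lie in different parts, or in the same block. -/
def multipartiteJoin {V : Type*} {s : ℕ} {β : Type*}
    (part : V → Fin s) (block : V → β) : SimpleGraph V :=
  SimpleGraph.fromRel (fun u w => part u ≠ part w ∨ block u = block w)

/-- In the `G`-join `𝒢` of complete graphs over a complete multipartite graph `G`: for a part
`r` containing (at least) two distinct blocks `l`, `m`, the vector equal to `1` on block `l`,
to `-pₗ/pₘ` on block `m` and `0` elsewhere is an eigenvector of the Laplacian `L(𝒢)` with
eigenvalue `N - N_r`, where `pₗ`, `pₘ` are the block sizes, `N_r` the size of part `r`, and `N`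
the total number of vertices. -/
theorem multipartiteJoin_part_eigenvector {V : Type*} [Fintype V] [DecidableEq V]
    {s : ℕ} {β : Type*} [DecidableEq β] (part : V → Fin s) (block : V → β)
    (hblock : ∀ u w : V, block u = block w → part u = part w)
    (r : Fin s) (l m : β) (hlm : l ≠ m)
    (hl : ∀ u : V, block u = l → part u = r) (hm : ∀ u : V, block u = m → part u = r)
    (hlne : ∃ u : V, block u = l) (hmne : ∃ u : V, block u = m) :
    (multipartiteJoin part block).lapMatrix ℝ *ᵥ
        (fun u => if block u = l then (1 : ℝ)
          else if block u = m then
            -(Fintype.card {u : V // block u = l} : ℝ) / (Fintype.card {u : V // block u = m} : ℝ)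
          else 0) =
      ((Fintype.card V : ℝ) - (Fintype.card {u : V // part u = r} : ℝ)) •
        (fun u => if block u = l then (1 : ℝ)
          else if block u = m then
            -(Fintype.card {u : V // block u = l} : ℝ) / (Fintype.card {u : V // block u = m} : ℝ)
          else 0) := by
  classical
  set G := multipartiteJoin part block with hG
  set x : V → ℝ := fun u => if block u = l then (1 : ℝ)
      else if block u = m then
        -(Fintype.card {u : V // block u = l} : ℝ) / (Fintype.card {u : V // block u = m} : ℝ)
      else 0 with hx
  set pl : ℝ := (Fintype.card {u : V // block u = l} : ℝ) with hpldef
  set pm : ℝ := (Fintype.card {u : V // block u = m} : ℝ) with hpmdef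
  have hadj : ∀ u w : V, G.Adj u w ↔ u ≠ w ∧ (part u ≠ part w ∨ block u = block w) := by
    intro u w
    simp only [hG, multipartiteJoin, SimpleGraph.fromRel_adj]
    constructor
    · rintro ⟨h, h2 | h2⟩
      · exact ⟨h, h2⟩
      · exact ⟨h, h2.imp Ne.symm Eq.symm⟩
    · rintro ⟨h, h2⟩; exact ⟨h, Or.inl h2⟩
  have hsum : ∀ (p : V → Prop) [DecidablePred p] (c : ℝ),
      ∑ w : V, (if p w then c else 0) = ((Finset.univ.filter p).card : ℝ) * c := by
    intro p _ c
    simp [Finset.sum_ite, mul_comm]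
  have hpl : pl = ((Finset.univ.filter fun w : V => block w = l).card : ℝ) := by
    rw [hpldef, Fintype.card_subtype]
  have hpm : pm = ((Finset.univ.filter fun w : V => block w = m).card : ℝ) := by
    rw [hpmdef, Fintype.card_subtype]
  have hpm0 : pm ≠ 0 := by
    obtain ⟨u, hu⟩ := hmne
    have : Nonempty {u : V // block u = m} := ⟨⟨u, hu⟩⟩
    rw [hpmdef]
    exact_mod_cast Fintype.card_pos.ne'
  have hcomp : ((Finset.univ.filter fun w : V => ¬ part w = r).card : ℝ)
      = (Fintype.card V : ℝ) - (Fintype.card {u : V // part u = r} : ℝ) := by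
    have h := Finset.card_filter_add_card_filter_not
      (s := (Finset.univ : Finset V)) (p := fun w : V => part w = r)
    rw [Finset.card_univ, Fintype.card_subtype] at *
    have h' := congrArg (Nat.cast : ℕ → ℝ) h
    push_cast at h'
    linarith
  have hx1 : ∀ w : V, block w = l → x w = 1 := by
    intro w h; simp [hx, h]
  have hx2 : ∀ w : V, block w = m → x w = -pl / pm := by
    intro w h; simp [hx, h, hlm.symm]
  have hx3 : ∀ w : V, block w ≠ l → block w ≠ m → x w = 0 := by
    intro w h1 h2; simp [hx, h1, h2]
  funext u
  have key : (G.lapMatrix ℝ *ᵥ x) u = ∑ w : V, (if G.Adj u w then (x u - x w) else 0) := by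
    rw [SimpleGraph.lapMatrix_mulVec_apply]
    rw [show (G.degree u : ℝ) * x u = ∑ w ∈ G.neighborFinset u, x u by
      rw [Finset.sum_const, nsmul_eq_mul]; rfl]
    rw [← Finset.sum_sub_distrib, SimpleGraph.neighborFinset_eq_filter, Finset.sum_filter]
  rw [key, Pi.smul_apply, smul_eq_mul]
  by_cases hul : block u = l
  · have hur : part u = r := hl u hul
    have hxu : x u = 1 := hx1 u hul
    have step : ∀ w : V, (if G.Adj u w then (x u - x w) else 0)
        = (if ¬ part w = r then (1 : ℝ) else 0) := by
      intro w
      by_cases hw : part w = r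
      · rw [if_neg (not_not_intro hw)]
        by_cases ha : G.Adj u w
        · rw [if_pos ha]
          rcases (hadj u w).1 ha with ⟨hne, hor | hbl⟩
          · exact absurd (hur.trans hw.symm) hor
          · rw [hxu, hx1 w (hbl.symm.trans hul)]; ring
        · rw [if_neg ha]
      · have ha : G.Adj u w := (hadj u w).2
          ⟨fun he => hw (he ▸ hur), Or.inl (fun hp => hw (hp ▸ hur))⟩
        rw [if_pos ha, if_pos hw, hxu,
          hx3 w (fun hc => hw (hl w hc)) (fun hc => hw (hm w hc))]
        ring
    rw [Finset.sum_congr rfl (fun w _ => step w), hsum, hcomp, hxu, mul_one]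
  · by_cases hum : block u = m
    · have hur : part u = r := hm u hum
      have hxu : x u = -pl / pm := hx2 u hum
      have step : ∀ w : V, (if G.Adj u w then (x u - x w) else 0)
          = (if ¬ part w = r then (-pl / pm : ℝ) else 0) := by
        intro w
        by_cases hw : part w = r
        · rw [if_neg (not_not_intro hw)]
          by_cases ha : G.Adj u w
          · rw [if_pos ha]
            rcases (hadj u w).1 ha with ⟨hne, hor | hbl⟩
            · exact absurd (hur.trans hw.symm) hor
            · rw [hxu, hx2 w (hbl.symm.trans hum)]; ring
          · rw [if_neg ha]
        · have ha : G.Adj u w := (hadj u w).2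
            ⟨fun he => hw (he ▸ hur), Or.inl (fun hp => hw (hp ▸ hur))⟩
          rw [if_pos ha, if_pos hw, hxu,
            hx3 w (fun hc => hw (hl w hc)) (fun hc => hw (hm w hc))]
          ring
      rw [Finset.sum_congr rfl (fun w _ => step w), hsum, hcomp, hxu]
    · have hxu : x u = 0 := hx3 u hul hum
      by_cases hur : part u = r
      · have step : ∀ w : V, (if G.Adj u w then (x u - x w) else 0) = 0 := by
          intro w
          by_cases ha : G.Adj u w
          · rw [if_pos ha, hxu]
            rcases (hadj u w).1 ha with ⟨hne, hor | hbl⟩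
            · have hwr : ¬ part w = r := fun hc => hor (hur.trans hc.symm)
              rw [hx3 w (fun hc => hwr (hl w hc)) (fun hc => hwr (hm w hc))]; ring
            · rw [hx3 w (fun hc => hul (hbl.trans hc)) (fun hc => hum (hbl.trans hc))]; ring
          · rw [if_neg ha]
        rw [Finset.sum_congr rfl (fun w _ => step w), Finset.sum_const_zero, hxu, mul_zero]
      · have step : ∀ w : V, (if G.Adj u w then (x u - x w) else 0)
            = (if block w = l then (-1 : ℝ) else 0) + (if block w = m then (pl / pm : ℝ) else 0) := by
          intro w
          by_cases h1 : block w = l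
          · have hwr : part w = r := hl w h1
            have ha : G.Adj u w := (hadj u w).2
              ⟨fun he => hur (by rw [he]; exact hwr), Or.inl (fun hp => hur (hp.trans hwr))⟩
            rw [if_pos ha, hxu, hx1 w h1, if_pos h1,
              if_neg (fun hc => hlm (h1.symm.trans hc))]
            ring
          · by_cases h2 : block w = m
            · have hwr : part w = r := hm w h2
              have ha : G.Adj u w := (hadj u w).2
                ⟨fun he => hur (by rw [he]; exact hwr), Or.inl (fun hp => hur (hp.trans hwr))⟩
              rw [if_pos ha, hxu, hx2 w h2, if_neg h1, if_pos h2]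
              ring
            · rw [if_neg h1, if_neg h2]
              by_cases ha : G.Adj u w
              · rw [if_pos ha, hxu, hx3 w h1 h2]; ring
              · rw [if_neg ha]; ring
        rw [Finset.sum_congr rfl (fun w _ => step w), Finset.sum_add_distrib, hsum, hsum,
          ← hpl, ← hpm, hxu, mul_zero]
        field_simp
        ring
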